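/- Let r be a positive integer with r ≤ n. For every encoder E ∈ ℝ^{r×n} and decoder D ∈ ℝ^{n×r}, the task-aware compression loss satisfies Tr(K(I − DE) Ψ (I − DE)ᵀ Kᵀ) ≥ Σ_{i=r+1}^{n} μᵢ. -/

import Mathlib

open Matrix


lemma trace_tmul_nonneg {a b : ℕ} (B : Matrix (Fin a) (Fin b) ℝ) : 0 ≤ (Bᵀ * B).trace := by
  rw [Matrix.trace]
  refine Finset.sum_nonneg fun i _ => ?_
  rw [Matrix.diag_apply, Matrix.mul_apply]
  exact Finset.sum_nonneg fun j _ => by simp [mul_self_nonneg]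

lemma diag_nonneg_of_proj {a : ℕ} (P : Matrix (Fin a) (Fin a) ℝ) (hs : Pᵀ = P)
    (hid : P * P = P) (i : Fin a) : 0 ≤ P i i := by
  have h : P i i = ∑ j, (P j i)^2 := by
    conv_lhs => rw [← hid]
    rw [Matrix.mul_apply]
    refine Finset.sum_congr rfl fun j _ => ?_
    have h2 : P i j = P j i := by conv_lhs => rw [← hs, Matrix.transpose_apply]
    rw [h2]; ring
  rw [h]
  exact Finset.sum_nonneg fun j _ => sq_nonneg _

lemma trace_sub_proj {a b c : ℕ} (A : Matrix (Fin a) (Fin b) ℝ)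
    (W : Matrix (Fin b) (Fin c) ℝ) (hW : Wᵀ * W = 1) :
    (Wᵀ * Aᵀ * A * W).trace ≤ (Aᵀ * A).trace := by
  set P : Matrix (Fin b) (Fin b) ℝ := 1 - W * Wᵀ with hP
  have hPid : P * P = P := by
    simp only [hP, Matrix.sub_mul, Matrix.mul_sub, Matrix.one_mul, Matrix.mul_one]
    rw [show W * Wᵀ * (W * Wᵀ) = W * (Wᵀ * W) * Wᵀ by rw [Matrix.mul_assoc, Matrix.mul_assoc, Matrix.mul_assoc], hW]
    simp
  have hPs : Pᵀ = P := by simp [hP, Matrix.transpose_sub, Matrix.transpose_mul]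
  have key : (Aᵀ * A).trace - (Wᵀ * Aᵀ * A * W).trace = ((A * P)ᵀ * (A * P)).trace := by
    have h1 : (Wᵀ * Aᵀ * A * W).trace = (Aᵀ * A * (W * Wᵀ)).trace := by
      rw [show Wᵀ * Aᵀ * A * W = Wᵀ * (Aᵀ * A * W) by simp [Matrix.mul_assoc],
        Matrix.trace_mul_comm]
      simp [Matrix.mul_assoc]
    have h2 : ((A * P)ᵀ * (A * P)).trace = (Aᵀ * A * P).trace := by
      rw [Matrix.transpose_mul, hPs,
        show P * Aᵀ * (A * P) = P * (Aᵀ * A * P) by simp [Matrix.mul_assoc], Matrix.trace_mul_comm,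
        show Aᵀ * A * P * P = Aᵀ * A * (P * P) by simp [Matrix.mul_assoc], hPid]
    rw [h1, h2, hP, Matrix.mul_sub, Matrix.mul_one, Matrix.trace_sub]
  linarith [trace_tmul_nonneg (A * P)]
open Matrix

lemma exists_W {n r : ℕ} (hrn : r ≤ n) (B : Matrix (Fin r) (Fin n) ℝ) :
    ∃ W : Matrix (Fin n) (Fin (n - r)) ℝ, Wᵀ * W = 1 ∧ B * W = 0 := by
  let T : EuclideanSpace ℝ (Fin n) →ₗ[ℝ] (Fin r → ℝ) :=
    B.mulVecLin ∘ₗ (WithLp.linearEquiv 2 ℝ (Fin n → ℝ)).toLinearMap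
  let V := LinearMap.ker T
  have hdim : n - r ≤ Module.finrank ℝ V := by
    have h1 := LinearMap.finrank_range_add_finrank_ker T
    rw [finrank_euclideanSpace_fin] at h1
    have h2 : Module.finrank ℝ (LinearMap.range T) ≤ r := by
      have := Submodule.finrank_le (LinearMap.range T)
      simpa [Module.finrank_pi] using this
    have h3 : Module.finrank ℝ V = Module.finrank ℝ (LinearMap.ker T) := rfl
    omega
  let b := stdOrthonormalBasis ℝ V
  let w : Fin (n - r) → EuclideanSpace ℝ (Fin n) := fun i => (b (Fin.castLE hdim i) : V)
  refine ⟨Matrix.of fun x i => w i x, ?_, ?_⟩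
  · ext i j
    have hb := b.orthonormal
    rw [orthonormal_iff_ite] at hb
    have := hb (Fin.castLE hdim i) (Fin.castLE hdim j)
    have hinner : (inner (𝕜 := ℝ) (w i) (w j) : ℝ) = if i = j then 1 else 0 := by
      have e : (inner (𝕜 := ℝ) (w i) (w j) : ℝ)
          = inner ℝ (b (Fin.castLE hdim i)) (b (Fin.castLE hdim j)) :=
        (Submodule.coe_inner _ _ _).symm
      rw [e, this]
      simp [Fin.castLE_inj]
    rw [PiLp.inner_apply] at hinner
    simp only [RCLike.inner_apply, conj_trivial] at hinner
    simp only [Matrix.mul_apply, Matrix.transpose_apply, Matrix.of_apply]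
    rw [Matrix.one_apply]
    rw [← hinner]
    exact Finset.sum_congr rfl fun x _ => mul_comm _ _
  · ext a j
    have hker : T (w j) = 0 := (b (Fin.castLE hdim j)).2
    have : B.mulVec (w j) = 0 := by simpa [T, Matrix.mulVecLin] using hker
    simp only [Matrix.mul_apply, Matrix.of_apply, Matrix.zero_apply]
    have := congrFun this a
    rw [Matrix.mulVec, dotProduct] at this
    simpa using this
open Matrix

lemma sum_mu_le {n r : ℕ} (hn : 0 < n) (hrn : r ≤ n) (μ : ℕ → ℝ)
    (hmono : ∀ a b : ℕ, 1 ≤ a → a ≤ b → b ≤ n → μ b ≤ μ a)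
    (hnn : ∀ j : ℕ, 1 ≤ j → j ≤ n → 0 ≤ μ j)
    (c : Fin n → ℝ) (hc0 : ∀ j, 0 ≤ c j) (hc1 : ∀ j, c j ≤ 1)
    (hsum : ∑ j, c j = (n - r : ℕ)) :
    ∑ i ∈ Finset.Icc (r+1) n, μ i ≤ ∑ j : Fin n, μ ((j : ℕ) + 1) * c j := by
  classical
  set F : Finset (Fin n) := Finset.univ.filter (fun j : Fin n => r ≤ (j : ℕ)) with hF
  have hre : ∑ i ∈ Finset.Icc (r+1) n, μ i = ∑ j ∈ F, μ ((j : ℕ) + 1) := by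
    refine Finset.sum_nbij' (fun a => (⟨(a-1) % n, Nat.mod_lt _ hn⟩ : Fin n))
      (fun b => (b : ℕ) + 1) ?_ ?_ ?_ ?_ ?_
    · intro a ha
      simp only [Finset.mem_Icc] at ha
      simp only [hF, Finset.mem_filter, Finset.mem_univ, true_and]
      simp only [Nat.mod_eq_of_lt (by omega : a - 1 < n)]
      omega
    · intro b hb
      simp only [hF, Finset.mem_filter, Finset.mem_univ, true_and] at hb
      simp only [Finset.mem_Icc]
      omega
    · intro a ha
      simp only [Finset.mem_Icc] at ha
      simp only [Nat.mod_eq_of_lt (by omega : a - 1 < n)]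
      omega
    · intro b hb
      apply Fin.ext
      simp only [Nat.add_sub_cancel, Nat.mod_eq_of_lt b.isLt]
    · intro a ha
      simp only [Finset.mem_Icc] at ha
      simp only [Nat.mod_eq_of_lt (by omega : a - 1 < n)]
      congr 1
      omega
  rw [hre, ← Finset.sum_filter_add_sum_filter_not Finset.univ (fun j : Fin n => r ≤ (j : ℕ))
    (fun j => μ ((j : ℕ) + 1) * c j), ← hF]
  rcases eq_or_lt_of_le hrn with hcase | hcase
  · -- r = n : F is empty
    have hFe : F = ∅ := by
      rw [hF, Finset.filter_eq_empty_iff]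
      intro j _
      omega
    rw [hFe]
    simp only [Finset.sum_empty, zero_add]
    refine Finset.sum_nonneg fun j _ => mul_nonneg (hnn _ (by omega) ?_) (hc0 j)
    have := j.isLt
    omega
  · -- r < n
    have hcard : F.card = n - r := by
      have : F = Finset.Ici (⟨r, hcase⟩ : Fin n) := by
        ext j
        simp [hF, Fin.le_def]
      rw [this, Fin.card_Ici]
    have key : ∑ j ∈ F, μ ((j:ℕ)+1) * (1 - c j) ≤ ∑ j ∈ Fᶜ, μ ((j:ℕ)+1) * c j := by
      have h1 : ∑ j ∈ F, μ ((j:ℕ)+1) * (1 - c j) ≤ ∑ j ∈ F, μ (r+1) * (1 - c j) := by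
        refine Finset.sum_le_sum fun j hj => ?_
        have hjm : r ≤ (j:ℕ) := by simpa [hF] using hj
        exact mul_le_mul_of_nonneg_right
          (hmono (r+1) ((j:ℕ)+1) (by omega) (by omega) (by have := j.isLt; omega))
          (by linarith [hc1 j])
      have h2 : ∑ j ∈ F, μ (r+1) * (1 - c j) = μ (r+1) * ∑ j ∈ Fᶜ, c j := by
        rw [← Finset.mul_sum]
        congr 1
        have hs : ∑ j ∈ F, c j + ∑ j ∈ Fᶜ, c j = (n - r : ℕ) := by
          rw [Finset.sum_add_sum_compl]
          exact hsum
        have : ∑ j ∈ F, (1 - c j) = (F.card : ℝ) - ∑ j ∈ F, c j := by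
          rw [Finset.sum_sub_distrib]
          simp
        rw [this, hcard]
        linarith
      have h3 : μ (r+1) * ∑ j ∈ Fᶜ, c j ≤ ∑ j ∈ Fᶜ, μ ((j:ℕ)+1) * c j := by
        rw [Finset.mul_sum]
        refine Finset.sum_le_sum fun j hj => ?_
        have hjm : (j:ℕ) < r := by
          simp only [hF, Finset.compl_filter, Finset.mem_filter, Finset.mem_univ, true_and,
            not_le] at hj
          exact hj
        exact mul_le_mul_of_nonneg_right (hmono ((j:ℕ)+1) (r+1) (by omega) (by omega) (by omega))
          (hc0 j)
      linarith
    have hco : Finset.filter (fun x : Fin n => ¬ r ≤ (x:ℕ)) Finset.univ = Fᶜ := by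
      rw [hF, Finset.compl_filter]
    rw [hco]
    have hexp : ∑ j ∈ F, μ ((j:ℕ)+1) * (1 - c j)
        = ∑ j ∈ F, μ ((j:ℕ)+1) - ∑ j ∈ F, μ ((j:ℕ)+1) * c j := by
      rw [← Finset.sum_sub_distrib]
      congr 1; ext j; ring
    linarith [key, hexp]
open Matrix


/-- task-aware PCA lower bound: for every encoder `E ∈ ℝ^{r×n}`
and decoder `D ∈ ℝ^{n×r}`, the task-aware compression loss
`Tr (K (I - D E) Ψ (I - D E)ᵀ Kᵀ)` is at least the sum of the bottom `n - r`
eigenvalues `μ_{r+1} + ⋯ + μ_n` of the Gram matrix `S = Lᵀ Kᵀ K L`.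
Eigenvalues are 1-indexed via `μ : ℕ → ℝ`, listed in descending order with
orthonormal eigenvectors `u`. -/
theorem task_aware_pca_lower_bound
    (n m r : ℕ) (hn : 0 < n) (hm : 0 < m) (hr : 0 < r) (hrn : r ≤ n)
    (Ψ L : Matrix (Fin n) (Fin n) ℝ) (hΨ : Ψ.PosDef) (hChol : Ψ = L * Lᵀ)
    (hLtri : ∀ i j : Fin n, i < j → L i j = 0) (hLdiag : ∀ i : Fin n, 0 < L i i)
    (K : Matrix (Fin m) (Fin n) ℝ)
    (μ : ℕ → ℝ) (u : Fin n → (Fin n → ℝ))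
    (hdesc : ∀ i : ℕ, 1 ≤ i → i < n → μ (i + 1) ≤ μ i)
    (hzero : μ (n + 1) = 0)
    (horth : ∀ i j : Fin n, dotProduct (u i) (u j) = if i = j then 1 else 0)
    (heig : ∀ i : Fin n, (Lᵀ * Kᵀ * K * L).mulVec (u i) = μ ((i : ℕ) + 1) • u i) :
    ∀ (E : Matrix (Fin r) (Fin n) ℝ) (D : Matrix (Fin n) (Fin r) ℝ),
      (K * (1 - D * E) * Ψ * (1 - D * E)ᵀ * Kᵀ).trace ≥
        ∑ i ∈ Finset.Icc (r + 1) n, μ i := by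
  intro E D
  classical
  set S : Matrix (Fin n) (Fin n) ℝ := Lᵀ * Kᵀ * K * L with hS
  -- monotonicity of μ on [1, n]
  have hmono : ∀ a b : ℕ, 1 ≤ a → a ≤ b → b ≤ n → μ b ≤ μ a := by
    intro a b ha hab hbn
    induction b with
    | zero => omega
    | succ k ih =>
      rcases eq_or_lt_of_le hab with h | h
      · rw [h]
      · have hak : a ≤ k := by omega
        exact le_trans (hdesc k (by omega) (by omega)) (ih hak (by omega))
  -- nonnegativity of μ on [1, n]
  have hnnF : ∀ i : Fin n, 0 ≤ μ ((i : ℕ) + 1) := by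
    intro i
    have h1 : dotProduct (u i) (S.mulVec (u i)) = μ ((i : ℕ) + 1) := by
      rw [heig i, dotProduct_smul, horth i i, if_pos rfl, smul_eq_mul, mul_one]
    have hS2 : S = (K * L)ᵀ * (K * L) := by
      rw [hS, Matrix.transpose_mul]
      simp only [Matrix.mul_assoc]
    have h2 : dotProduct (u i) (S.mulVec (u i))
        = dotProduct ((K * L).mulVec (u i)) ((K * L).mulVec (u i)) := by
      rw [hS2, ← Matrix.mulVec_mulVec, Matrix.dotProduct_mulVec, Matrix.vecMul_transpose]
    rw [← h1, h2]
    exact Finset.sum_nonneg fun j _ => mul_self_nonneg _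
  have hnn : ∀ j : ℕ, 1 ≤ j → j ≤ n → 0 ≤ μ j := by
    intro j h1 h2
    have := hnnF ⟨j - 1, by omega⟩
    simpa [Nat.sub_add_cancel h1] using this
  -- the orthonormal matrix W with columns in ker (E * L)
  obtain ⟨W, hWo, hWk⟩ := exists_W hrn (E * L)
  set A : Matrix (Fin m) (Fin n) ℝ := K * (1 - D * E) * L with hA
  -- Step 0 : LHS = trace (Aᵀ * A)
  have step0 : (K * (1 - D * E) * Ψ * (1 - D * E)ᵀ * Kᵀ).trace = (Aᵀ * A).trace := by
    have : K * (1 - D * E) * Ψ * (1 - D * E)ᵀ * Kᵀ = A * Aᵀ := by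
      rw [hA, hChol, Matrix.transpose_mul, Matrix.transpose_mul]
      simp only [Matrix.mul_assoc]
    rw [this, Matrix.trace_mul_comm]
  -- Step 3 : A * W = (K * L) * W
  have hAW : A * W = K * L * W := by
    have hA2 : A = K * L - K * D * (E * L) := by
      rw [hA, Matrix.mul_sub, Matrix.sub_mul, Matrix.mul_one]
      simp only [Matrix.mul_assoc]
    rw [hA2, Matrix.sub_mul, Matrix.mul_assoc (K * D), hWk, Matrix.mul_zero, sub_zero]
  have step3 : (Wᵀ * Aᵀ * A * W).trace = (Wᵀ * S * W).trace := by
    have e1 : Wᵀ * Aᵀ * A * W = (A * W)ᵀ * (A * W) := by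
      rw [Matrix.transpose_mul A W]
      simp only [Matrix.mul_assoc]
    have e2 : Wᵀ * S * W = (K * L * W)ᵀ * (K * L * W) := by
      rw [hS, Matrix.transpose_mul, Matrix.transpose_mul]
      simp only [Matrix.mul_assoc]
    rw [e1, e2, hAW]
  -- Step 4 : diagonalization S = Uᵀ * Dμ * U
  set U : Matrix (Fin n) (Fin n) ℝ := Matrix.of fun i j => u i j with hU
  set Dμ : Matrix (Fin n) (Fin n) ℝ := Matrix.diagonal fun j : Fin n => μ ((j : ℕ) + 1) with hD
  have hUU : U * Uᵀ = 1 := by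
    ext i j
    rw [Matrix.mul_apply, Matrix.one_apply, ← horth i j]
    simp [hU, dotProduct]
  have hUtU : Uᵀ * U = 1 := mul_eq_one_comm.mp hUU
  have hSU : S * Uᵀ = Uᵀ * Dμ := by
    ext x j
    have h1 : (S * Uᵀ) x j = (S.mulVec (u j)) x := by
      rw [Matrix.mul_apply, Matrix.mulVec, dotProduct]
      simp [hU]
    rw [h1, heig j]
    simp [hD, hU, Matrix.mul_diagonal, mul_comm]
  have hSdiag : S = Uᵀ * Dμ * U := by
    calc S = S * 1 := (Matrix.mul_one S).symm
    _ = S * (Uᵀ * U) := by rw [hUtU]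
    _ = (S * Uᵀ) * U := (Matrix.mul_assoc S Uᵀ U).symm
    _ = Uᵀ * Dμ * U := by rw [hSU]
  -- Step 5 : trace (Wᵀ S W) = ∑ μ(j+1) c j
  set C : Matrix (Fin n) (Fin (n - r)) ℝ := U * W with hC
  have hCtC : Cᵀ * C = 1 := by
    rw [hC, Matrix.transpose_mul, Matrix.mul_assoc, ← Matrix.mul_assoc Uᵀ U W, hUtU,
      Matrix.one_mul, hWo]
  set Q : Matrix (Fin n) (Fin n) ℝ := C * Cᵀ with hQ
  set c : Fin n → ℝ := fun j => Q j j with hc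
  have htrace : (Wᵀ * S * W).trace = ∑ j : Fin n, μ ((j : ℕ) + 1) * c j := by
    have e1 : Wᵀ * S * W = Cᵀ * (Dμ * C) := by
      rw [hSdiag, hC, Matrix.transpose_mul]
      simp only [Matrix.mul_assoc]
    rw [e1, Matrix.trace_mul_comm, Matrix.mul_assoc, Matrix.trace]
    refine Finset.sum_congr rfl fun j _ => ?_
    rw [Matrix.diag_apply, hD, Matrix.diagonal_mul]
  have hc0 : ∀ j, 0 ≤ c j := by
    intro j
    show 0 ≤ Q j j
    rw [hQ, Matrix.mul_apply]
    exact Finset.sum_nonneg fun i _ => by simp [mul_self_nonneg]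
  have hc1 : ∀ j, c j ≤ 1 := by
    intro j
    have hQid : Q * Q = Q := by
      rw [hQ, Matrix.mul_assoc, ← Matrix.mul_assoc Cᵀ, hCtC, Matrix.one_mul]
    have hQs : Qᵀ = Q := by rw [hQ, Matrix.transpose_mul, Matrix.transpose_transpose]
    have hPid : (1 - Q) * (1 - Q) = 1 - Q := by
      simp only [Matrix.sub_mul, Matrix.mul_sub, Matrix.one_mul, Matrix.mul_one, hQid]
      abel
    have hPs : (1 - Q)ᵀ = 1 - Q := by rw [Matrix.transpose_sub, Matrix.transpose_one, hQs]
    have := diag_nonneg_of_proj (1 - Q) hPs hPid j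
    simp only [Matrix.sub_apply, Matrix.one_apply_eq] at this
    show Q j j ≤ 1
    linarith
  have hcsum : ∑ j, c j = ((n - r : ℕ) : ℝ) := by
    have h : ∑ j, c j = Q.trace := rfl
    rw [h, Matrix.trace_mul_comm, hCtC, Matrix.trace_one]
    simp
  -- conclude
  have key := sum_mu_le hn hrn μ hmono hnn c hc0 hc1 hcsum
  rw [ge_iff_le, step0]
  calc ∑ i ∈ Finset.Icc (r + 1) n, μ i ≤ ∑ j : Fin n, μ ((j : ℕ) + 1) * c j := key
  _ = (Wᵀ * S * W).trace := htrace.symm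
  _ = (Wᵀ * Aᵀ * A * W).trace := step3.symm
  _ ≤ (Aᵀ * A).trace := trace_sub_proj A W hWo
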